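/- In the reduced normalized chain complex of the simplicial circle S^1 = Δ^1/∂Δ^1, for a nondegenerate surjection u of arity r and degree r−1, the interval-cut coproduct AW(u)(Δ(0,1)) ∈ Ñ_*(S^1)^{⊗r} vanishes unless both (u(1),…,u(r)) and (u(r),…,u(2r−1)) are permutations of (1,…,r), in which case it equals sgn(u(1),…,u(r))·Δ(0,1)^{⊗r}. -/

import Mathlib

/-- The cut points `n_i` for an interval cut of the interval `{0,1}` (the case
of the `1`-simplex): the nondecreasing sequence with `n_i = 0` for `i < j` and
`n_i = 1` for `i ≥ j`. -/
def cutPt (j i : ℕ) : ℕ := if j ≤ i then 1 else 0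

/-- The vertex list of the interval `[n_{i-1}, n_i]` (sequence positions are
1-based here). -/
def ivl (j i : ℕ) : List ℕ := List.range' (cutPt j (i - 1)) (cutPt j i - cutPt j (i - 1) + 1)

/-- The vertex list of the simplex `Δ(C_{(k)})`: the concatenation of the
intervals `[n_{i-1}, n_i]` with `u(i) = k`, for the surjection given by the
list of values `L` (0-based positions). -/
def vlist (L : List ℕ) (k j : ℕ) : List ℕ :=
  (((List.range L.length).filter (fun i => L.getD i 0 == k)).map
    (fun i => ivl j (i + 1))).flatten

/-- Position `i` (0-based) is a caesura of `L`: its value reappears later. -/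
def isCaes (L : List ℕ) (i : ℕ) : Bool := (L.drop (i + 1)).contains (L.getD i 0)

/-- The length of the interval `[n_i, n_{i+1}]` attached to position `i`:
`n_{i+1} − n_i` for a final interval, and `n_{i+1} − n_i + 1` for an inner
interval (one attached to a caesura). -/
def lenI (L : List ℕ) (j i : ℕ) : ℕ :=
  (cutPt j (i + 1) - cutPt j i) + (if isCaes L i then 1 else 0)

/-- The position sign-exponent: each inner interval `[n_{i-1}, n_i]`
contributes `n_i`. -/
def posExp (L : List ℕ) (j : ℕ) : ℕ :=
  ∑ i ∈ Finset.range L.length, if isCaes L i then cutPt j (i + 1) else 0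

/-- The permutation sign-exponent: the Koszul sign of the shuffle taking the
intervals to the order of their values, with the interval lengths as degrees. -/
def permExp (L : List ℕ) (j : ℕ) : ℕ :=
  ∑ i ∈ Finset.range L.length, ∑ i' ∈ Finset.range L.length,
    if i < i' ∧ L.getD i' 0 < L.getD i 0 then lenI L j i * lenI L j i' else 0

/-- The coefficient of `Δ(0,1)^{⊗r}` in the interval cut coproduct
`AW(u)(Δ(0,1)) ∈ Ñ_*(S¹)^{⊗r}`: only terms where every factor `Δ(C_{(k)})`
equals `Δ(0,1)` survive in the reduced normalized chains of the circle
`S¹ = Δ¹/∂Δ¹` (which is spanned by `Δ(0,1)` in positive degree). -/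
def AWcoeff (r : ℕ) (L : List ℕ) : ℤ :=
  ∑ j ∈ Finset.Icc 1 L.length,
    if ∀ k ∈ Finset.Icc 1 r, vlist L k j = [0, 1] then
      (-1 : ℤ) ^ (posExp L j + permExp L j)
    else 0

/-- The number of inversions of a list of values. -/
def invExp (M : List ℕ) : ℕ :=
  ∑ i ∈ Finset.range M.length, ∑ i' ∈ Finset.range M.length,
    if i < i' ∧ M.getD i' 0 < M.getD i 0 then 1 else 0

/-- The signature of a list which is a permutation of `(1, …, r)`. -/
def listSign (M : List ℕ) : ℤ := (-1) ^ invExp M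

/-! ### Auxiliary lemmas -/

lemma ivl_eq (j m : ℕ) (hj : 1 ≤ j) (hm : 1 ≤ m) :
    ivl j m = if m < j then [0] else if m = j then [0, 1] else [1] := by
  unfold ivl cutPt
  rcases Nat.lt_trichotomy m j with h | h | h
  · have h1 : ¬ j ≤ m - 1 := by omega
    have h2 : ¬ j ≤ m := by omega
    simp only [h1, h2, if_false, if_pos h]
    rfl
  · have h1 : ¬ j ≤ m - 1 := by omega
    have h2 : j ≤ m := by omega
    have h3 : ¬ m < j := by omega
    simp only [h1, h2, if_true, if_false, if_neg h3, if_pos h]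
    rfl
  · have h1 : j ≤ m - 1 := by omega
    have h2 : j ≤ m := by omega
    have h3 : ¬ m < j := by omega
    have h4 : m ≠ j := by omega
    simp only [h1, h2, if_true, if_neg h3, if_neg h4]
    rfl

lemma countL (l : List ℕ) (k : ℕ) :
    l.count k = ∑ i ∈ Finset.range l.length, if l.getD i 0 = k then 1 else 0 := by
  induction l with
  | nil => simp
  | cons a l ih =>
    rw [List.length_cons, Finset.sum_range_succ']
    simp only [List.getD_cons_succ, List.getD_cons_zero]
    rw [List.count_cons, ih]
    congr 1
    by_cases h : a = k <;> simp [h]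

lemma listFinsetSum (n : ℕ) (g : ℕ → Bool) (h : ℕ → ℕ) :
    (((List.range n).filter g).map h).sum = ∑ i ∈ Finset.range n, if g i then h i else 0 := by
  induction n with
  | zero => simp
  | succ n ih =>
    rw [List.range_succ, Finset.sum_range_succ, List.filter_append, List.map_append,
      List.sum_append, ih]
    by_cases hg : g n <;> simp [hg]

lemma count0_ivl (j i : ℕ) (hj : 1 ≤ j) : (ivl j (i + 1)).count 0 = if i < j then 1 else 0 := by
  rw [ivl_eq j (i+1) hj (by omega)]
  rcases Nat.lt_trichotomy (i+1) j with h | h | h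
  · rw [if_pos h, if_pos (by omega)]; rfl
  · rw [if_neg (by omega), if_pos h, if_pos (by omega)]; rfl
  · rw [if_neg (by omega), if_neg (by omega), if_neg (by omega)]; rfl

lemma count1_ivl (j i : ℕ) (hj : 1 ≤ j) : (ivl j (i + 1)).count 1 = if j ≤ i + 1 then 1 else 0 := by
  rw [ivl_eq j (i+1) hj (by omega)]
  rcases Nat.lt_trichotomy (i+1) j with h | h | h
  · rw [if_pos h, if_neg (by omega)]; rfl
  · rw [if_neg (by omega), if_pos h, if_pos (by omega)]; rfl
  · rw [if_neg (by omega), if_neg (by omega), if_pos (by omega)]; rfl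

lemma vlist_count (L : List ℕ) (k j c : ℕ) :
    (vlist L k j).count c =
      ∑ i ∈ Finset.range L.length, if L.getD i 0 = k then (ivl j (i + 1)).count c else 0 := by
  unfold vlist
  rw [List.count_flatten, List.map_map, listFinsetSum]
  apply Finset.sum_congr rfl
  intro i _
  by_cases h : L.getD i 0 = k <;> simp [h]

lemma vlist_count0 (L : List ℕ) (k j : ℕ) (hj : 1 ≤ j) (hjl : j ≤ L.length) :
    (vlist L k j).count 0 = (L.take j).count k := by
  rw [vlist_count, countL]
  have hl : (L.take j).length = j := by simp [hjl]
  rw [hl]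
  rw [← Finset.sum_subset (Finset.range_subset_range.mpr hjl)
    (fun i _ hi => by
      have hij : ¬ i < j := by simp only [Finset.mem_range] at hi; omega
      rw [count0_ivl _ _ hj, if_neg hij]; simp)]
  apply Finset.sum_congr rfl
  intro i hi
  have hij : i < j := Finset.mem_range.mp hi
  have hg : (L.take j).getD i 0 = L.getD i 0 := by
    rw [List.getD_eq_getElem?_getD, List.getD_eq_getElem?_getD, List.getElem?_take, if_pos hij]
  rw [hg, count0_ivl _ _ hj, if_pos hij]

lemma vlist_count1 (L : List ℕ) (k j : ℕ) (hj : 1 ≤ j) (hjl : j ≤ L.length) :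
    (vlist L k j).count 1 = (L.drop (j - 1)).count k := by
  rw [vlist_count, countL]
  have hl : (L.drop (j-1)).length = L.length - (j-1) := by simp
  rw [hl]
  have hz : ∀ x ∈ Finset.Ico 0 L.length, x ∉ Finset.Ico (j-1) L.length →
      (if L.getD x 0 = k then (ivl j (x + 1)).count 1 else 0) = 0 := by
    intro i hin hi
    have hij : ¬ j ≤ i + 1 := by
      simp only [Finset.mem_Ico] at hin hi; omega
    rw [count1_ivl _ _ hj, if_neg hij]; simp
  have step1 : (∑ i ∈ Finset.range L.length,
      if L.getD i 0 = k then (ivl j (i + 1)).count 1 else 0) =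
      ∑ i ∈ Finset.Ico (j-1) L.length, if L.getD i 0 = k then 1 else 0 := by
    rw [Finset.range_eq_Ico,
      ← Finset.sum_subset (Finset.Ico_subset_Ico (Nat.zero_le _) (le_refl _)) hz]
    apply Finset.sum_congr rfl
    intro i hi
    have hij : j ≤ i + 1 := by simp only [Finset.mem_Ico] at hi; omega
    rw [count1_ivl _ _ hj, if_pos hij]
  rw [step1, Finset.sum_Ico_eq_sum_range]
  apply Finset.sum_congr rfl
  intro i _
  have hg : (L.drop (j-1)).getD i 0 = L.getD (j - 1 + i) 0 := by
    rw [List.getD_eq_getElem?_getD, List.getD_eq_getElem?_getD, List.getElem?_drop]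
  rw [hg]

lemma mem_ivl {x j m : ℕ} (hx : x ∈ ivl j m) : cutPt j (m-1) ≤ x ∧ x ≤ cutPt j m := by
  unfold ivl at hx
  rw [List.mem_range'] at hx
  obtain ⟨i, hi, rfl⟩ := hx
  have hmono : cutPt j (m-1) ≤ cutPt j m := by
    unfold cutPt; split_ifs <;> omega
  constructor
  · omega
  · simp only [Nat.one_mul] at *; omega

lemma cutPt_le_one (j m : ℕ) : cutPt j m ≤ 1 := by unfold cutPt; split_ifs <;> omega

lemma cutPt_mono (j : ℕ) {m m' : ℕ} (h : m ≤ m') : cutPt j m ≤ cutPt j m' := by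
  unfold cutPt; split_ifs <;> omega

lemma vlist_mem {L : List ℕ} {k j x : ℕ} (hx : x ∈ vlist L k j) : x ≤ 1 := by
  unfold vlist at hx
  rw [List.mem_flatten] at hx
  obtain ⟨l, hl, hxl⟩ := hx
  rw [List.mem_map] at hl
  obtain ⟨i, _, rfl⟩ := hl
  exact le_trans (mem_ivl hxl).2 (cutPt_le_one _ _)

lemma vlist_sorted (L : List ℕ) (k j : ℕ) : List.Pairwise (· ≤ ·) (vlist L k j) := by
  unfold vlist
  rw [List.pairwise_flatten]
  constructor
  · intro l hl
    rw [List.mem_map] at hl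
    obtain ⟨i, _, rfl⟩ := hl
    unfold ivl
    have : List.Pairwise (· < ·) (List.range' (cutPt j i) (cutPt j (i+1) - cutPt j i + 1)) := by
      have := List.pairwise_lt_range' (s := cutPt j i) (n := cutPt j (i+1) - cutPt j i + 1)
        (step := 1) (by omega)
      simpa using this
    simp only [Nat.add_sub_cancel]
    exact this.imp le_of_lt
  · rw [List.pairwise_map]
    apply List.Pairwise.imp_of_mem (R := (· < ·))
    · intro i i' _ _ hii' x hx y hy
      have h1 := (mem_ivl hx).2
      have h2 := (mem_ivl hy).1
      simp only [Nat.add_sub_cancel] at h1 h2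
      exact le_trans h1 (le_trans (cutPt_mono j (by omega : i + 1 ≤ i' + 1 - 1)) h2)
    · exact List.Pairwise.filter _ List.pairwise_lt_range

lemma sorted_eq01 {v : List ℕ} (hs : List.Pairwise (· ≤ ·) v) (hm : ∀ x ∈ v, x ≤ 1)
    (h0 : v.count 0 = 1) (h1 : v.count 1 = 1) : v = [0, 1] := by
  have hlen : v.length = 2 := by
    have : v.length = _ := List.length_eq_countP_add_countP (fun x => x == 0)
    have hc : List.countP (fun a => decide ¬(a == 0) = true) v = v.count 1 := by
      apply List.countP_congr
      intro x hx
      have := hm x hx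
      constructor
      · intro h; simp at h ⊢; omega
      · intro h; simp at h ⊢; omega
    rw [hc] at this
    have h0' : List.countP (fun x => x == 0) v = 1 := h0
    omega
  obtain ⟨a, b, rfl⟩ := List.length_eq_two.mp hlen
  have ha := hm a (by simp)
  have hb := hm b (by simp)
  have hab : a ≤ b := by
    simp only [List.pairwise_cons] at hs
    exact hs.1 b (by simp)
  simp only [List.count_cons, List.count_nil] at h0 h1
  rcases Nat.le_one_iff_eq_zero_or_eq_one.mp ha with rfl | rfl <;>
    rcases Nat.le_one_iff_eq_zero_or_eq_one.mp hb with rfl | rfl <;> simp_all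

lemma count_map_range (r a : ℕ) :
    (List.map (· + 1) (List.range r)).count a = if 1 ≤ a ∧ a ≤ r then 1 else 0 := by
  induction r with
  | zero =>
    simp only [List.range_zero, List.map_nil, List.count_nil]
    rw [if_neg (by omega)]
  | succ r ih =>
    rw [List.range_succ, List.map_append, List.count_append, ih]
    have : List.count a (List.map (· + 1) [r]) = if a = r + 1 then 1 else 0 := by
      simp only [List.map_cons, List.map_nil, List.count_singleton]
      by_cases h : a = r + 1
      · simp [h]
      · rw [if_neg h]
        simp only [beq_iff_eq]
        rw [if_neg (fun hh => h hh.symm)]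
    rw [this]
    split_ifs <;> omega

lemma length_eq_sum_count (l : List ℕ) (r : ℕ) (hv : ∀ a ∈ l, 1 ≤ a ∧ a ≤ r) :
    l.length = ∑ k ∈ Finset.Icc 1 r, l.count k := by
  induction l with
  | nil => simp
  | cons a l ih =>
    have ha : a ∈ Finset.Icc 1 r := by
      have := hv a (by simp)
      simp [Finset.mem_Icc]; omega
    have hsum : ∑ k ∈ Finset.Icc 1 r, (a :: l).count k =
        ∑ k ∈ Finset.Icc 1 r, (l.count k + if k = a then 1 else 0) := by
      apply Finset.sum_congr rfl
      intro k _
      rw [List.count_cons]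
      by_cases h : k = a
      · simp [h]
      · rw [if_neg h]
        simp only [beq_iff_eq]
        rw [if_neg (fun hh => h hh.symm)]
    rw [hsum, Finset.sum_add_distrib, Finset.sum_ite_eq' (Finset.Icc 1 r) a (fun _ => 1),
      if_pos ha, ← ih (fun x hx => hv x (by simp [hx]))]
    simp

lemma cond_iff (r : ℕ) (hr : 1 ≤ r) (L : List ℕ) (hlen : L.length = 2 * r - 1)
    (hvals : ∀ a ∈ L, 1 ≤ a ∧ a ≤ r) (j : ℕ) (hj1 : 1 ≤ j) (hj2 : j ≤ L.length) :
    (∀ k ∈ Finset.Icc 1 r, vlist L k j = [0, 1]) ↔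
      (j = r ∧ (L.take r).Perm (List.map (· + 1) (List.range r)) ∧
        (L.drop (r - 1)).Perm (List.map (· + 1) (List.range r))) := by
  constructor
  · intro h
    have hc0 : ∀ k ∈ Finset.Icc 1 r, (L.take j).count k = 1 := by
      intro k hk
      rw [← vlist_count0 L k j hj1 hj2, h k hk]
      rfl
    have hc1 : ∀ k ∈ Finset.Icc 1 r, (L.drop (j - 1)).count k = 1 := by
      intro k hk
      rw [← vlist_count1 L k j hj1 hj2, h k hk]
      rfl
    have hlend : (L.drop (j - 1)).length = r := by
      rw [length_eq_sum_count _ r (fun a ha => hvals a (List.drop_subset _ _ ha)),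
        Finset.sum_congr rfl hc1]
      simp [Nat.card_Icc]
    have hjr : j = r := by
      rw [List.length_drop, hlen] at hlend
      omega
    subst hjr
    refine ⟨rfl, ?_, ?_⟩
    · rw [List.perm_iff_count]
      intro a
      rw [count_map_range]
      by_cases ha : 1 ≤ a ∧ a ≤ j
      · rw [if_pos ha]
        exact hc0 a (Finset.mem_Icc.mpr ha)
      · rw [if_neg ha, List.count_eq_zero]
        intro hmem
        exact ha (hvals a (List.take_subset _ _ hmem))
    · rw [List.perm_iff_count]
      intro a
      rw [count_map_range]
      by_cases ha : 1 ≤ a ∧ a ≤ j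
      · rw [if_pos ha]
        exact hc1 a (Finset.mem_Icc.mpr ha)
      · rw [if_neg ha, List.count_eq_zero]
        intro hmem
        exact ha (hvals a (List.drop_subset _ _ hmem))
  · rintro ⟨rfl, hp0, hp1⟩
    intro k hk
    rw [Finset.mem_Icc] at hk
    apply sorted_eq01 (vlist_sorted L k j) (fun x hx => vlist_mem hx)
    · rw [vlist_count0 L k j hj1 hj2, hp0.count_eq, count_map_range, if_pos hk]
    · rw [vlist_count1 L k j hj1 hj2, hp1.count_eq, count_map_range, if_pos hk]

lemma caes_char (r : ℕ) (hr : 1 ≤ r) (L : List ℕ) (hlen : L.length = 2 * r - 1)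
    (hvals : ∀ a ∈ L, 1 ≤ a ∧ a ≤ r)
    (hp1 : (L.drop (r - 1)).Perm (List.map (· + 1) (List.range r)))
    (i : ℕ) (hi : i < L.length) :
    isCaes L i = decide (i + 1 < r) := by
  have hgetD : L.getD i 0 = L[i] := List.getD_eq_getElem L 0 hi
  have hk : 1 ≤ L[i] ∧ L[i] ≤ r := hvals _ (List.getElem_mem hi)
  have hc1 : (L.drop (r - 1)).count L[i] = 1 := by
    rw [hp1.count_eq, count_map_range, if_pos hk]
  unfold isCaes
  rw [hgetD]
  rcases Nat.lt_trichotomy (i + 1) r with h | h | h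
  · rw [decide_eq_true h]
    rw [List.elem_iff]
    have hmem : L[i] ∈ L.drop (r - 1) := by
      rw [← List.count_pos_iff, hc1]; omega
    have : L.drop (r - 1) = (L.drop (i + 1)).drop (r - 1 - (i + 1)) := by
      rw [List.drop_drop]
      congr 1
      omega
    rw [this] at hmem
    exact List.drop_subset _ _ hmem
  · have hir : i = r - 1 := by omega
    rw [decide_eq_false (by omega)]
    rw [Bool.eq_false_iff, Ne, List.elem_iff]
    intro hmem
    have e : r - 1 = i := by omega
    have hd : L.drop (r - 1) = L[i] :: L.drop (i + 1) := by
      rw [e, List.drop_eq_getElem_cons hi]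
    rw [hd, List.count_cons_self] at hc1
    have : 0 < (L.drop (i + 1)).count L[i] := List.count_pos_iff.mpr hmem
    omega
  · rw [decide_eq_false (by omega)]
    rw [Bool.eq_false_iff, Ne, List.elem_iff]
    intro hmem
    have hd : L.drop i = L[i] :: L.drop (i + 1) := List.drop_eq_getElem_cons hi
    have hsub : (L.drop i).count L[i] ≤ (L.drop (r - 1)).count L[i] := by
      have : L.drop i = (L.drop (r - 1)).drop (i - (r - 1)) := by
        rw [List.drop_drop]
        congr 1
        omega
      rw [this]
      exact (List.drop_sublist _ _).count_le _
    rw [hd, List.count_cons_self] at hsub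
    have : 0 < (L.drop (i + 1)).count L[i] := List.count_pos_iff.mpr hmem
    omega

lemma lenI_char (r : ℕ) (hr : 1 ≤ r) (L : List ℕ) (hlen : L.length = 2 * r - 1)
    (hvals : ∀ a ∈ L, 1 ≤ a ∧ a ≤ r)
    (hp1 : (L.drop (r - 1)).Perm (List.map (· + 1) (List.range r)))
    (i : ℕ) (hi : i < L.length) :
    lenI L r i = if i < r then 1 else 0 := by
  unfold lenI
  rw [caes_char r hr L hlen hvals hp1 i hi]
  unfold cutPt
  simp only [decide_eq_true_eq]
  split_ifs <;> omega

lemma posExp_eq (r : ℕ) (hr : 1 ≤ r) (L : List ℕ) (hlen : L.length = 2 * r - 1)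
    (hvals : ∀ a ∈ L, 1 ≤ a ∧ a ≤ r)
    (hp1 : (L.drop (r - 1)).Perm (List.map (· + 1) (List.range r))) :
    posExp L r = 0 := by
  unfold posExp
  apply Finset.sum_eq_zero
  intro i hi
  rw [Finset.mem_range] at hi
  rw [caes_char r hr L hlen hvals hp1 i hi]
  by_cases h : i + 1 < r
  · rw [decide_eq_true h, if_pos rfl]
    unfold cutPt
    rw [if_neg (by omega)]
  · rw [decide_eq_false h]
    simp

lemma permExp_eq (r : ℕ) (hr : 1 ≤ r) (L : List ℕ) (hlen : L.length = 2 * r - 1)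
    (hvals : ∀ a ∈ L, 1 ≤ a ∧ a ≤ r)
    (hp1 : (L.drop (r - 1)).Perm (List.map (· + 1) (List.range r))) :
    permExp L r = invExp (L.take r) := by
  have hrl : r ≤ L.length := by omega
  have hlt : (L.take r).length = r := by simp [hrl]
  have hgd : ∀ i < r, (L.take r).getD i 0 = L.getD i 0 := by
    intro i hir
    rw [List.getD_eq_getElem?_getD, List.getD_eq_getElem?_getD, List.getElem?_take, if_pos hir]
  unfold permExp invExp
  rw [hlt]
  have step1 : (∑ i ∈ Finset.range L.length, ∑ i' ∈ Finset.range L.length,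
      if i < i' ∧ L.getD i' 0 < L.getD i 0 then lenI L r i * lenI L r i' else 0) =
      ∑ i ∈ Finset.range L.length, ∑ i' ∈ Finset.range L.length,
      if i < i' ∧ i' < r ∧ L.getD i' 0 < L.getD i 0 then 1 else 0 := by
    apply Finset.sum_congr rfl
    intro i hi
    apply Finset.sum_congr rfl
    intro i' hi'
    rw [Finset.mem_range] at hi hi'
    rw [lenI_char r hr L hlen hvals hp1 i hi, lenI_char r hr L hlen hvals hp1 i' hi']
    by_cases h1 : i < i' ∧ L.getD i' 0 < L.getD i 0
    · rw [if_pos h1]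
      by_cases h2 : i' < r
      · rw [if_pos (show i < r by omega), if_pos h2, if_pos ⟨h1.1, h2, h1.2⟩]
      · have hn : ¬(i < i' ∧ i' < r ∧ L.getD i' 0 < L.getD i 0) := fun hc => h2 hc.2.1
        rw [if_neg h2, if_neg hn, Nat.mul_zero]
    · have hn : ¬(i < i' ∧ i' < r ∧ L.getD i' 0 < L.getD i 0) := fun hc => h1 ⟨hc.1, hc.2.2⟩
      rw [if_neg h1, if_neg hn]
  rw [step1]
  have hz1 : ∀ i ∈ Finset.range L.length, i ∉ Finset.range r →
      (∑ i' ∈ Finset.range L.length,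
        if i < i' ∧ i' < r ∧ L.getD i' 0 < L.getD i 0 then 1 else 0) = 0 := by
    intro i _ hi
    rw [Finset.mem_range] at hi
    apply Finset.sum_eq_zero
    intro i' _
    rw [if_neg (by omega)]
  rw [← Finset.sum_subset (Finset.range_subset_range.mpr hrl) hz1]
  apply Finset.sum_congr rfl
  intro i hi
  rw [Finset.mem_range] at hi
  have hz2 : ∀ i' ∈ Finset.range L.length, i' ∉ Finset.range r →
      (if i < i' ∧ i' < r ∧ L.getD i' 0 < L.getD i 0 then 1 else 0) = 0 := by
    intro i' _ hi'
    rw [Finset.mem_range] at hi'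
    rw [if_neg (by omega)]
  rw [← Finset.sum_subset (Finset.range_subset_range.mpr hrl) hz2]
  apply Finset.sum_congr rfl
  intro i' hi'
  rw [Finset.mem_range] at hi'
  rw [hgd i hi, hgd i' hi']
  by_cases h : i < i' ∧ L.getD i' 0 < L.getD i 0
  · rw [if_pos ⟨h.1, hi', h.2⟩, if_pos h]
  · have hn : ¬(i < i' ∧ i' < r ∧ L.getD i' 0 < L.getD i 0) := fun hc => h ⟨hc.1, hc.2.2⟩
    rw [if_neg hn, if_neg h]

/-- For a nondegenerate surjection `u` of arity `r` and degree `r−1` (given by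
its list of values `L`, of length `2r−1`), the interval cut coproduct
`AW(u)(Δ(0,1)) ∈ Ñ_*(S¹)^{⊗r}` vanishes unless both `(u(1), …, u(r))` and
`(u(r), …, u(2r−1))` are permutations of `(1, …, r)`, in which case it equals
`sgn(u(1), …, u(r)) · Δ(0,1)^{⊗r}`. -/
theorem AW_circle (r : ℕ) (hr : 1 ≤ r) (L : List ℕ)
    (hlen : L.length = 2 * r - 1)
    (hvals : ∀ a ∈ L, 1 ≤ a ∧ a ≤ r)
    (hsurj : ∀ v, 1 ≤ v → v ≤ r → v ∈ L)
    (hnd : List.Chain' (· ≠ ·) L) :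
    AWcoeff r L =
      if (L.take r).Perm (List.map (· + 1) (List.range r)) ∧
          (L.drop (r - 1)).Perm (List.map (· + 1) (List.range r)) then
        listSign (L.take r)
      else 0 := by
  unfold AWcoeff
  by_cases hp : (L.take r).Perm (List.map (· + 1) (List.range r)) ∧
      (L.drop (r - 1)).Perm (List.map (· + 1) (List.range r))
  · rw [if_pos hp]
    have hmem : r ∈ Finset.Icc 1 L.length := by
      rw [Finset.mem_Icc]
      omega
    rw [Finset.sum_eq_single_of_mem r hmem (fun j hj hjr => by
      rw [Finset.mem_Icc] at hj
      rw [if_neg]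
      intro hc
      exact hjr ((cond_iff r hr L hlen hvals j hj.1 hj.2).mp hc).1)]
    rw [if_pos ((cond_iff r hr L hlen hvals r hr (by omega)).mpr ⟨rfl, hp.1, hp.2⟩)]
    rw [posExp_eq r hr L hlen hvals hp.2, permExp_eq r hr L hlen hvals hp.2]
    rw [Nat.zero_add]
    rfl
  · rw [if_neg hp]
    apply Finset.sum_eq_zero
    intro j hj
    rw [Finset.mem_Icc] at hj
    rw [if_neg]
    intro hc
    exact hp ((cond_iff r hr L hlen hvals j hj.1 hj.2).mp hc).2
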